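/- Fix an integer n > 1, f ∈ ℤ_n and k ∈ {0,…,n−1}. Then there exists a t-path γ with t = 2(n−1), γ(0) = f, γ(t) = f, and phase exponent p(γ) ≡ 2k (mod n'), where n' = 2n for even n and n' = n for odd n. (Such a path may be taken to zig-zag k times between f and f+1 and then remain at f.) -/

import Mathlib

open scoped Classical

/-- `efn x = exp(2πi x)`. -/
noncomputable def efn (x : ℝ) : ℂ := Complex.exp (2 * Real.pi * Complex.I * x)

/-- `ω_n`: a (2n)-th root of unity for even `n`, an n-th root of unity for odd `n`. -/
noncomputable def omegaN (n : ℕ) : ℂ :=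
  if Even n then efn (1 / (2 * n)) else efn (1 / n)

/-- `n' = 2n` for even `n`, `n' = n` for odd `n`. -/
def nPrime (n : ℕ) : ℕ := if Even n then 2 * n else n

/-- The `n`-site hopper transfer matrix `U(n)_{jk} = ω_n^{(j-k)^2}/√n`,
with `(j-k)^2` computed from the integer representatives in `{0,…,n-1}`. -/
noncomputable def hopperU (n : ℕ) [NeZero n] : Matrix (ZMod n) (ZMod n) ℂ :=
  fun j k => omegaN n ^ (((j.val : ℤ) - (k.val : ℤ)).natAbs ^ 2) / (Real.sqrt n : ℂ)

/-- The amplitude `a[γ] = ψ_{γ(0)} ∏_{t'=0}^{t-1} U(n)_{γ(t') γ(t'+1)}` of a `t`-path. -/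
noncomputable def amp (n : ℕ) [NeZero n] (ψ : ZMod n → ℂ) (t : ℕ)
    (γ : Fin (t + 1) → ZMod n) : ℂ :=
  ψ (γ 0) * ∏ k : Fin t, hopperU n (γ k.castSucc) (γ k.succ)

/-- The (un-reduced) phase exponent `Σ_{t'=0}^{t-1} (γ(t') - γ(t'+1))²` of a `t`-path,
differences computed via the integer representatives. -/
def phaseSum (n : ℕ) [NeZero n] (t : ℕ) (γ : Fin (t + 1) → ZMod n) : ℤ :=
  ∑ k : Fin t, (((γ k.castSucc).val : ℤ) - ((γ k.succ).val : ℤ)) ^ 2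

/-- Restriction of a `t`-path to a `t₀`-path (`t₀ ≤ t`). -/
def restrictPath (n : ℕ) {t₀ t : ℕ} (h : t₀ ≤ t) (γ : Fin (t + 1) → ZMod n) :
    Fin (t₀ + 1) → ZMod n :=
  fun k => γ (Fin.castLE (Nat.succ_le_succ h) k)

/-- `s^t_{ifp}(E)`: the number of `t`-paths in `E_t` starting at `i`, ending at `f`,
with phase exponent `p` (mod `n'`). -/
noncomputable def sCount (n : ℕ) [NeZero n] {t₀ : ℕ} (t : ℕ) (h : t₀ ≤ t)
    (E : Set (Fin (t₀ + 1) → ZMod n)) (i f : ZMod n) (p : ℕ) : ℕ :=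
  Set.ncard {γ : Fin (t + 1) → ZMod n |
    restrictPath n h γ ∈ E ∧ γ 0 = i ∧ γ (Fin.last t) = f ∧
    phaseSum n t γ % (nPrime n : ℤ) = (p : ℤ)}

/-- The quantum measure at time `t` of a set `F` of `t`-paths:
`μ_t(F) = Σ_f |Σ_{γ ∈ F, γ(t)=f} a[γ]|²`. -/
noncomputable def mu (n : ℕ) [NeZero n] (ψ : ZMod n → ℂ) (t : ℕ)
    (F : Set (Fin (t + 1) → ZMod n)) : ℝ :=
  ∑ f : ZMod n, ‖∑ γ : Fin (t + 1) → ZMod n,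
    if γ ∈ F ∧ γ (Fin.last t) = f then amp n ψ t γ else 0‖ ^ 2

/-- For any `f ∈ ℤ_n` and `k ∈ {0,…,n-1}` there is a `2(n-1)`-path
starting and ending at `f` whose phase exponent is `≡ 2k (mod n')`. -/
theorem stmt5 (n : ℕ) [NeZero n] (hn : 1 < n) (f : ZMod n) (k : ℕ) (hk : k < n) :
    ∃ γ : Fin (2 * (n - 1) + 1) → ZMod n,
      γ 0 = f ∧ γ (Fin.last (2 * (n - 1))) = f ∧
      Int.ModEq (nPrime n) (phaseSum n (2 * (n - 1)) γ) (2 * k) := by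
  set t := 2 * (n - 1) with ht
  set g : Fin (t + 1) → ZMod n :=
    fun j => if j.val % 2 = 1 ∧ j.val < 2 * k then f + 1 else f with hg
  have h2k : 2 * k ≤ t := by omega
  have hfv : f.val < n := ZMod.val_lt f
  haveI : Fact (1 < n) := ⟨hn⟩
  have hadd : ((f + 1 : ZMod n)).val = (f.val + 1) % n := by
    rw [ZMod.val_add, ZMod.val_one]
  set c : ℤ := ((f.val : ℤ) - (((f + 1 : ZMod n)).val : ℤ)) ^ 2 with hcdef
  have hc : (nPrime n : ℤ) ∣ c - 1 := by
    rcases Nat.lt_or_ge (f.val + 1) n with h | h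
    · have : ((f + 1 : ZMod n)).val = f.val + 1 := by rw [hadd, Nat.mod_eq_of_lt h]
      have hc1 : c = 1 := by rw [hcdef, this]; push_cast; ring
      simp [hc1]
    · have hfv' : f.val = n - 1 := by omega
      have : ((f + 1 : ZMod n)).val = 0 := by rw [hadd, hfv', show n - 1 + 1 = n by omega, Nat.mod_self]
      rw [hcdef, this, hfv']
      have hcast : ((n - 1 : ℕ) : ℤ) = (n : ℤ) - 1 := by push_cast [Nat.cast_sub (by omega : 1 ≤ n)]; ring
      rw [hcast]
      unfold nPrime
      by_cases he : Even n
      · obtain ⟨m, hm⟩ := he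
        rw [if_pos ⟨m, hm⟩]
        refine ⟨(m : ℤ) - 1, ?_⟩
        push_cast [hm]
        ring
      · rw [if_neg he]
        exact ⟨(n : ℤ) - 2, by ring⟩
  refine ⟨g, ?_, ?_, ?_⟩
  · have : ¬ ((0 : Fin (t + 1)).val % 2 = 1 ∧ (0 : Fin (t + 1)).val < 2 * k) := by
      simp
    simp only [hg, if_neg this]
  · have : ¬ ((Fin.last t).val % 2 = 1 ∧ (Fin.last t).val < 2 * k) := by
      simp only [Fin.val_last, ht]; omega
    simp only [hg, if_neg this]
  · have hterm : ∀ j : Fin t,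
        (((g j.castSucc).val : ℤ) - ((g j.succ).val : ℤ)) ^ 2
          = if (j : ℕ) < 2 * k then c else 0 := by
      intro j
      have hcs : (j.castSucc : Fin (t + 1)).val = (j : ℕ) := rfl
      have hsc : (j.succ : Fin (t + 1)).val = (j : ℕ) + 1 := rfl
      by_cases h1 : (j : ℕ) < 2 * k
      · rw [if_pos h1]
        rcases Nat.even_or_odd (j : ℕ) with he | ho
        · rw [Nat.even_iff] at he
          have hA : ¬ ((j.castSucc : Fin (t + 1)).val % 2 = 1 ∧
              (j.castSucc : Fin (t + 1)).val < 2 * k) := by rw [hcs]; omega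
          have hB : ((j.succ : Fin (t + 1)).val % 2 = 1 ∧
              (j.succ : Fin (t + 1)).val < 2 * k) := by rw [hsc]; omega
          simp only [hg, if_neg hA, if_pos hB, hcdef]
        · rw [Nat.odd_iff] at ho
          have hA : ((j.castSucc : Fin (t + 1)).val % 2 = 1 ∧
              (j.castSucc : Fin (t + 1)).val < 2 * k) := by rw [hcs]; omega
          have hB : ¬ ((j.succ : Fin (t + 1)).val % 2 = 1 ∧
              (j.succ : Fin (t + 1)).val < 2 * k) := by rw [hsc]; omega
          simp only [hg, if_pos hA, if_neg hB, hcdef]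
          ring
      · rw [if_neg h1]
        have hA : ¬ ((j.castSucc : Fin (t + 1)).val % 2 = 1 ∧
            (j.castSucc : Fin (t + 1)).val < 2 * k) := by rw [hcs]; omega
        have hB : ¬ ((j.succ : Fin (t + 1)).val % 2 = 1 ∧
            (j.succ : Fin (t + 1)).val < 2 * k) := by rw [hsc]; omega
        simp only [hg, if_neg hA, if_neg hB]
        ring
    have hsum : phaseSum n t g = (2 * k : ℤ) * c := by
      unfold phaseSum
      rw [Finset.sum_congr rfl (fun j _ => hterm j)]
      rw [Fin.sum_univ_eq_sum_range (fun j => if j < 2 * k then c else 0) t]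
      rw [← Finset.sum_range_add_sum_Ico _ h2k]
      have e1 : ∑ j ∈ Finset.range (2 * k), (if j < 2 * k then c else 0)
          = (2 * k : ℤ) * c := by
        rw [Finset.sum_congr rfl (fun j hj =>
          if_pos (Finset.mem_range.mp hj))]
        rw [Finset.sum_const, Finset.card_range]
        push_cast; ring
      have e2 : ∑ j ∈ Finset.Ico (2 * k) t, (if j < 2 * k then c else 0) = 0 := by
        refine Finset.sum_eq_zero (fun j hj => ?_)
        rw [Finset.mem_Ico] at hj
        exact if_neg (by omega)
      rw [e1, e2, add_zero]
    rw [hsum]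
    have h1c : c ≡ 1 [ZMOD (nPrime n : ℤ)] :=
      (Int.modEq_iff_dvd.mpr hc).symm
    simpa using Int.ModEq.mul_left (2 * (k : ℤ)) h1c
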